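/- Let H ∈ F₂^{m×n} have rank m over F₂ and be (δ,γ)-expanding; let β > 0, ω > 0, let ε satisfy 0 < ε < δγ/2, and let 0 < ξ < (δ − 2ε/γ)/2. Then every ξ-cluster Ω_j of Ω(ε) that is typical (i.e. p_G(Ω_j ∩ Ξ_ω(β)) ≥ p_G(Ω_j)/2) satisfies the Gibbs-weight bound p_G(Ω_j) ≤ 2^{1+m−n} · (1 + e^{−β})^{−m} · (Σ_{i=0}^{⌊2n(⟨ε⟩_β+ω)/γ⌋} binom(n,i)) · exp(−β(⟨E⟩_β − ωn)), where ⟨ε⟩_β = ⟨E⟩_β/n. -/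

import Mathlib

open scoped Classical

/-- A binary matrix `H ∈ F₂^{m×n}` is `(δ,γ)`-expanding if every `x ∈ F₂ⁿ`
with Hamming weight `|x| ≤ δn` satisfies `|Hx| ≥ γ|x|`. -/
def IsExpanding {m n : ℕ} (H : Matrix (Fin m) (Fin n) (ZMod 2)) (δ γ : ℝ) : Prop :=
  ∀ x : Fin n → ZMod 2, (hammingNorm x : ℝ) ≤ δ * n →
    γ * (hammingNorm x : ℝ) ≤ (hammingNorm (H.mulVec x) : ℝ)

/-- `x ∼ y` on `Ω(ε) = {z : |Hz| < εn}`: there is a path `v₀ = x, …, v_ℓ = y`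
inside `Ω(ε)` whose consecutive members differ in fewer than `ξn` coordinates.
Its equivalence classes are the ξ-clusters of `Ω(ε)`. -/
def Connected {m n : ℕ} (H : Matrix (Fin m) (Fin n) (ZMod 2)) (ε ξ : ℝ)
    (x y : Fin n → ZMod 2) : Prop :=
  ∃ (ℓ : ℕ) (v : ℕ → Fin n → ZMod 2), v 0 = x ∧ v ℓ = y ∧
    (∀ i ≤ ℓ, (hammingNorm (H.mulVec (v i)) : ℝ) < ε * n) ∧
    (∀ i < ℓ, (hammingNorm (v i + v (i + 1)) : ℝ) < ξ * n)

section Aux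
open Finset

lemma sum_exp_pi (m : ℕ) (β : ℝ) :
    ∑ y : Fin m → ZMod 2, Real.exp (-β * (hammingNorm y : ℝ)) = (1 + Real.exp (-β)) ^ m := by
  have h : ∀ y : Fin m → ZMod 2, Real.exp (-β * (hammingNorm y : ℝ))
      = ∏ i, (if y i ≠ 0 then Real.exp (-β) else 1) := by
    intro y
    rw [hammingNorm, Finset.card_filter]
    push_cast
    rw [Finset.mul_sum, Real.exp_sum]
    refine Finset.prod_congr rfl fun i _ => ?_
    by_cases h : y i ≠ 0 <;> simp [h]
  simp_rw [h]
  rw [← Fintype.prod_sum (fun (_ : Fin m) (a : ZMod 2) => if a ≠ 0 then Real.exp (-β) else 1)]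
  have h2 : ∀ i : Fin m, (∑ a : ZMod 2, (if a ≠ 0 then Real.exp (-β) else 1))
      = 1 + Real.exp (-β) := by
    intro i
    rw [show (Finset.univ : Finset (ZMod 2)) = {0, 1} by decide]
    rw [Finset.sum_insert (by decide), Finset.sum_singleton]
    norm_num
  rw [Finset.prod_congr rfl (fun i _ => h2 i), Finset.prod_const, Finset.card_univ,
    Fintype.card_fin]

lemma fiber_card {m n : ℕ} (H : Matrix (Fin m) (Fin n) (ZMod 2)) (hrank : H.rank = m)
    (y : Fin m → ZMod 2) :
    (Finset.univ.filter (fun u : Fin n → ZMod 2 => H.mulVec u = y)).card = 2 ^ (n - m) := by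
  classical
  set L := H.mulVecLin with hL
  have hsurj : LinearMap.range L = ⊤ := by
    apply Submodule.eq_top_of_finrank_eq
    rw [show Module.finrank (ZMod 2) (LinearMap.range L) = H.rank from rfl, hrank,
      Module.finrank_fin_fun]
  -- get a preimage of y
  obtain ⟨u₀, hu₀⟩ : ∃ u₀, L u₀ = y := by
    have : y ∈ LinearMap.range L := by rw [hsurj]; trivial
    exact this
  -- bijection with kernel
  have hker : (Finset.univ.filter (fun u : Fin n → ZMod 2 => H.mulVec u = y)).card
      = Fintype.card (LinearMap.ker L) := by
    rw [← Fintype.card_coe]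
    refine (Fintype.card_of_bijective (f := fun v : LinearMap.ker L => (⟨u₀ + v.1, by
        simp only [Finset.mem_filter, Finset.mem_univ, true_and]
        show L (u₀ + v.1) = y
        rw [map_add, hu₀, v.2, add_zero]⟩ :
          {u : Fin n → ZMod 2 // u ∈ Finset.univ.filter (fun u => H.mulVec u = y)})) ?_).symm
    constructor
    · intro a b hab
      simp only [Subtype.mk.injEq] at hab
      exact Subtype.ext (by have := congrArg (fun w => w - u₀) hab; simpa using this)
    · rintro ⟨u, hu⟩
      simp only [Finset.mem_filter, Finset.mem_univ, true_and] at hu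
      refine ⟨⟨u - u₀, ?_⟩, ?_⟩
      · rw [LinearMap.mem_ker, map_sub, hu₀]
        show H.mulVec u - y = 0
        rw [hu, sub_self]
      · ext i; simp
  rw [hker]
  have : Fintype.card (LinearMap.ker L) = 2 ^ Module.finrank (ZMod 2) (LinearMap.ker L) := by
    have := Module.card_eq_pow_finrank (K := ZMod 2) (V := LinearMap.ker L)
    simpa [ZMod.card] using this
  rw [this]
  congr 1
  have hrn := LinearMap.finrank_range_add_finrank_ker L
  rw [show Module.finrank (ZMod 2) (LinearMap.range L) = H.rank from rfl, hrank,
    Module.finrank_fin_fun] at hrn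
  omega

lemma Z_val {m n : ℕ} (H : Matrix (Fin m) (Fin n) (ZMod 2)) (hrank : H.rank = m) (β : ℝ) :
    ∑ u : Fin n → ZMod 2, Real.exp (-β * (hammingNorm (H.mulVec u) : ℝ))
      = 2 ^ (n - m) * (1 + Real.exp (-β)) ^ m := by
  classical
  rw [← Finset.sum_fiberwise' Finset.univ (fun u => H.mulVec u)
    (fun y => Real.exp (-β * (hammingNorm y : ℝ)))]
  have : ∀ y : Fin m → ZMod 2,
      (∑ _u ∈ Finset.univ.filter (fun u : Fin n → ZMod 2 => H.mulVec u = y),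
        Real.exp (-β * (hammingNorm y : ℝ)))
      = 2 ^ (n - m) * Real.exp (-β * (hammingNorm y : ℝ)) := by
    intro y
    rw [Finset.sum_const, fiber_card H hrank y, nsmul_eq_mul]
    push_cast
    ring
  rw [Finset.sum_congr rfl fun y _ => this y, ← Finset.mul_sum, sum_exp_pi]

lemma zmod2_add_self {n : ℕ} (z : Fin n → ZMod 2) : z + z = 0 := by
  funext i
  exact CharTwo.add_self_eq_zero (z i)

lemma hammingNorm_add_le {n : ℕ} (a b : Fin n → ZMod 2) :
    hammingNorm (a + b) ≤ hammingNorm a + hammingNorm b := by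
  have hab : a + b = a - b := by
    funext i
    simp [sub_eq_add_neg, CharTwo.neg_eq]
  rw [hab, show a - b = -b + a by abel, ← hammingDist_eq_hammingNorm, hammingDist_comm]
  calc hammingDist a b ≤ hammingDist a 0 + hammingDist 0 b := hammingDist_triangle a 0 b
    _ = hammingNorm a + hammingNorm b := by
        rw [hammingDist_zero_right, hammingDist_comm, hammingDist_zero_right]

lemma connected_symm {m n : ℕ} {H : Matrix (Fin m) (Fin n) (ZMod 2)} {ε ξ : ℝ}
    {x y : Fin n → ZMod 2} (h : Connected H ε ξ x y) : Connected H ε ξ y x := by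
  obtain ⟨ℓ, v, h0, hℓ, hΩ, hstep⟩ := h
  refine ⟨ℓ, fun i => v (ℓ - i), by simpa using hℓ, by simpa using h0, fun i hi => hΩ _ (by omega), fun i hi => ?_⟩
  have h1 : ℓ - i = (ℓ - (i+1)) + 1 := by omega
  have h2 := hstep (ℓ - (i+1)) (by omega)
  show (hammingNorm (v (ℓ - i) + v (ℓ - (i+1))) : ℝ) < ξ * n
  rw [h1, add_comm]
  exact h2

lemma connected_trans {m n : ℕ} {H : Matrix (Fin m) (Fin n) (ZMod 2)} {ε ξ : ℝ}
    {x y z : Fin n → ZMod 2} (h1 : Connected H ε ξ x y) (h2 : Connected H ε ξ y z) :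
    Connected H ε ξ x z := by
  obtain ⟨ℓ₁, v₁, h10, h1ℓ, h1Ω, h1s⟩ := h1
  obtain ⟨ℓ₂, v₂, h20, h2ℓ, h2Ω, h2s⟩ := h2
  classical
  refine ⟨ℓ₁ + ℓ₂, fun i => if i < ℓ₁ then v₁ i else v₂ (i - ℓ₁), ?_, ?_, ?_, ?_⟩
  · by_cases h : 0 < ℓ₁
    · simp [h, h10]
    · have hℓ0 : ℓ₁ = 0 := by omega
      simp only [h, if_false]
      rw [Nat.zero_sub, h20, ← h1ℓ, hℓ0, h10]
  · have : ¬ (ℓ₁ + ℓ₂ < ℓ₁) := by omega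
    simp only [this, if_false]
    rw [Nat.add_sub_cancel_left, h2ℓ]
  · intro i hi
    by_cases h : i < ℓ₁
    · simpa [h] using h1Ω i (by omega)
    · simpa [h] using h2Ω (i - ℓ₁) (by omega)
  · intro i hi
    by_cases h : i + 1 < ℓ₁
    · have h' : i < ℓ₁ := by omega
      simpa [h, h'] using h1s i (by omega)
    · by_cases h' : i < ℓ₁
      · -- i + 1 = ℓ₁
        have he : i + 1 = ℓ₁ := by omega
        have hy : v₂ (i + 1 - ℓ₁) = v₁ (i+1) := by
          rw [he, Nat.sub_self, h20, ← h1ℓ]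
        simp only [h, h', if_false, if_true, hy]
        exact h1s i (by omega)
      · have he : i + 1 - ℓ₁ = (i - ℓ₁) + 1 := by omega
        simp only [h, h', if_false, he]
        exact h2s (i - ℓ₁) (by omega)

lemma cluster_close {m n : ℕ} {H : Matrix (Fin m) (Fin n) (ZMod 2)} {δ γ ε ξ : ℝ}
    (hγ : 0 < γ) (hexp : IsExpanding H δ γ) (hε0 : 0 < ε) (hε : ε < δ * γ / 2)
    (hξ0 : 0 < ξ) (hξ : ξ < (δ - 2 * ε / γ) / 2) (hn : 0 < (n : ℝ))
    {b y : Fin n → ZMod 2} (hconn : Connected H ε ξ b y) :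
    (hammingNorm (y + b) : ℝ) < 2 * ε * n / γ := by
  obtain ⟨ℓ, v, h0, hℓ, hΩ, hstep⟩ := hconn
  have hεδ : 2 * ε / γ < δ := by
    rw [div_lt_iff₀ hγ]
    nlinarith
  have hb : (hammingNorm (H.mulVec b) : ℝ) < ε * n := by simpa [h0] using hΩ 0 (Nat.zero_le ℓ)
  have key : ∀ i, i ≤ ℓ → (hammingNorm (v i + b) : ℝ) < 2 * ε * n / γ := by
    intro i
    induction i with
    | zero =>
      intro _
      rw [h0, zmod2_add_self, hammingNorm_eq_zero.2 rfl]
      push_cast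
      exact div_pos (by nlinarith) hγ
    | succ i ih =>
      intro hi
      have ih' := ih (by omega)
      -- v (i+1) + b = (v (i+1) + v i) + (v i + b)
      have hdecomp : v (i+1) + b = (v (i+1) + v i) + (v i + b) := by
        rw [add_assoc, ← add_assoc (v i), zmod2_add_self, zero_add]
      have hw1 : (hammingNorm (v (i+1) + b) : ℝ)
          ≤ (hammingNorm (v (i+1) + v i) : ℝ) + (hammingNorm (v i + b) : ℝ) := by
        rw [hdecomp]
        exact_mod_cast hammingNorm_add_le (v (i+1) + v i) (v i + b)
      have hstepi : (hammingNorm (v (i+1) + v i) : ℝ) < ξ * n := by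
        rw [add_comm]
        exact hstep i (by omega)
      have hsmall : (hammingNorm (v (i+1) + b) : ℝ) ≤ δ * n := by
        have hpos : 0 < δ - 2 * ε / γ := by nlinarith
        have h1 : ξ + 2 * ε / γ ≤ δ := by nlinarith
        have h2 := mul_le_mul_of_nonneg_right h1 (le_of_lt hn)
        have h3 : ξ * (n:ℝ) + 2 * ε * n / γ = (ξ + 2 * ε / γ) * n := by ring
        linarith
      have hexp' := hexp _ hsmall
      have hHw : (hammingNorm (H.mulVec (v (i+1) + b)) : ℝ) < 2 * ε * n := by
        have hvi : (hammingNorm (H.mulVec (v (i+1))) : ℝ) < ε * n := hΩ (i+1) hi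
        have : H.mulVec (v (i+1) + b) = H.mulVec (v (i+1)) + H.mulVec b := by
          rw [Matrix.mulVec_add]
        rw [this]
        calc (hammingNorm (H.mulVec (v (i+1)) + H.mulVec b) : ℝ)
            ≤ (hammingNorm (H.mulVec (v (i+1))) : ℝ) + (hammingNorm (H.mulVec b) : ℝ) := by
              exact_mod_cast hammingNorm_add_le _ _
          _ < 2 * ε * n := by linarith
      rw [lt_div_iff₀ hγ]
      calc (hammingNorm (v (i+1) + b) : ℝ) * γ = γ * (hammingNorm (v (i+1) + b) : ℝ) := by ring
        _ ≤ (hammingNorm (H.mulVec (v (i+1) + b)) : ℝ) := hexp'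
        _ < 2 * ε * n := hHw
  have := key ℓ le_rfl
  rwa [hℓ] at this

lemma card_ball {n : ℕ} (r : ℕ) :
    ((Finset.univ : Finset (Fin n → ZMod 2)).filter (fun z => hammingNorm z ≤ r)).card
      ≤ ∑ i ∈ Finset.range (r + 1), n.choose i := by
  classical
  have hinj : Set.InjOn (fun z : Fin n → ZMod 2 => Finset.univ.filter (fun i => z i ≠ 0))
      ((Finset.univ.filter (fun z : Fin n → ZMod 2 => hammingNorm z ≤ r)) : Set (Fin n → ZMod 2)) := by
    intro a _ b _ hab
    funext i
    simp only at hab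
    have hi : (i ∈ Finset.univ.filter (fun j => a j ≠ 0)) ↔ (i ∈ Finset.univ.filter (fun j => b j ≠ 0)) := by rw [hab]
    simp only [Finset.mem_filter, Finset.mem_univ, true_and] at hi
    have key : ∀ c : ZMod 2, c = 0 ∨ c = 1 := by decide
    rcases key (a i) with h1 | h1 <;> rcases key (b i) with h2 | h2 <;>
      simp [h1, h2] at hi ⊢ <;> tauto
  have hmaps : ∀ z ∈ (Finset.univ.filter (fun z : Fin n → ZMod 2 => hammingNorm z ≤ r)),
      (Finset.univ.filter (fun i => z i ≠ 0)) ∈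
        (Finset.range (r+1)).biUnion (fun i => Finset.powersetCard i (Finset.univ : Finset (Fin n))) := by
    intro z hz
    simp only [Finset.mem_filter, Finset.mem_univ, true_and] at hz
    rw [Finset.mem_biUnion]
    refine ⟨hammingNorm z, Finset.mem_range.2 (by omega), ?_⟩
    rw [Finset.mem_powersetCard]
    exact ⟨Finset.subset_univ _, rfl⟩
  calc ((Finset.univ : Finset (Fin n → ZMod 2)).filter (fun z => hammingNorm z ≤ r)).card
      ≤ ((Finset.range (r+1)).biUnion (fun i => Finset.powersetCard i (Finset.univ : Finset (Fin n)))).card :=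
        Finset.card_le_card_of_injOn _ hmaps hinj
    _ ≤ ∑ i ∈ Finset.range (r+1), (Finset.powersetCard i (Finset.univ : Finset (Fin n))).card :=
        Finset.card_biUnion_le
    _ = ∑ i ∈ Finset.range (r+1), n.choose i := by
        refine Finset.sum_congr rfl fun i _ => ?_
        rw [Finset.card_powersetCard, Finset.card_univ, Fintype.card_fin]


end Aux

set_option maxHeartbeats 2000000 in
/-- for `H` of full rank `m` that is `(δ,γ)`-expanding, with
`β, ω > 0`, `0 < ε < δγ/2` and `0 < ξ < (δ − 2ε/γ)/2`, every typical ξ-cluster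
`Ω_j` of `Ω(ε)` satisfies
`p_G(Ω_j) ≤ 2^{1+m−n}·(1+e^{−β})^{−m}·(Σ_{i=0}^{⌊2n(⟨ε⟩_β+ω)/γ⌋} C(n,i))·exp(−β(⟨E⟩_β − ωn))`. -/
theorem typical_cluster_gibbs_weight {m n : ℕ} (H : Matrix (Fin m) (Fin n) (ZMod 2))
    (hrank : H.rank = m)
    (δ γ β ω ε ξ : ℝ) (hδ : 0 < δ) (hγ : 0 < γ) (hexp : IsExpanding H δ γ)
    (hβ : 0 < β) (hω : 0 < ω)
    (hε0 : 0 < ε) (hε : ε < δ * γ / 2)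
    (hξ0 : 0 < ξ) (hξ : ξ < (δ - 2 * ε / γ) / 2)
    (x : Fin n → ZMod 2) (hx : (hammingNorm (H.mulVec x) : ℝ) < ε * n) :
    let Z : ℝ := ∑ u : Fin n → ZMod 2, Real.exp (-β * (hammingNorm (H.mulVec u) : ℝ))
    let pG : (Fin n → ZMod 2) → ℝ := fun u =>
      Real.exp (-β * (hammingNorm (H.mulVec u) : ℝ)) / Z
    let Eavg : ℝ := ∑ u : Fin n → ZMod 2, pG u * (hammingNorm (H.mulVec u) : ℝ)
    let Ξ : Finset (Fin n → ZMod 2) := Finset.univ.filter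
      (fun u : Fin n → ZMod 2 => |(hammingNorm (H.mulVec u) : ℝ) - Eavg| ≤ ω * n)
    let C : Finset (Fin n → ZMod 2) := Finset.univ.filter
      (fun y : Fin n → ZMod 2 => Connected H ε ξ x y)
    (∑ u ∈ C ∩ Ξ, pG u) ≥ (∑ u ∈ C, pG u) / 2 →
    ∑ u ∈ C, pG u ≤
      2 * (2 : ℝ) ^ m / 2 ^ n * ((1 + Real.exp (-β)) ^ m)⁻¹ *
        (∑ i ∈ Finset.range (⌊2 * (n : ℝ) * (Eavg / n + ω) / γ⌋₊ + 1),
          (Nat.choose n i : ℝ)) *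
        Real.exp (-β * (Eavg - ω * n)) := by

  intro Z pG Eavg Ξ C hyp
  classical
  have hCmem : ∀ u, u ∈ C ↔ Connected H ε ξ x u := by
    intro u; simp only [C, Finset.mem_filter, Finset.mem_univ, true_and]
  have hΞmem : ∀ u, u ∈ Ξ ↔ |(hammingNorm (H.mulVec u) : ℝ) - Eavg| ≤ ω * n := by
    intro u; simp only [Ξ, Finset.mem_filter, Finset.mem_univ, true_and]
  have hpgdef : ∀ u, pG u = Real.exp (-β * (hammingNorm (H.mulVec u) : ℝ)) / Z :=
    fun u => rfl
  have hZ : Z = 2 ^ (n - m) * (1 + Real.exp (-β)) ^ m := Z_val H hrank β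
  have hZpos : 0 < Z := by rw [hZ]; positivity
  have hpg : ∀ u, 0 ≤ pG u := fun u => by
    rw [hpgdef]; exact div_nonneg (Real.exp_nonneg _) hZpos.le
  have hEavg : 0 ≤ Eavg :=
    Finset.sum_nonneg fun u _ => mul_nonneg (hpg u) (Nat.cast_nonneg _)
  clear_value C Ξ Eavg pG Z
  have hn : 0 < (n : ℝ) := by
    rcases Nat.eq_zero_or_pos n with h | h
    · exfalso
      subst h
      have h0 : (0:ℝ) ≤ (hammingNorm (H.mulVec x) : ℝ) := Nat.cast_nonneg _
      simp only [Nat.cast_zero, mul_zero] at hx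
      linarith
    · exact_mod_cast h
  have hmn : m ≤ n := hrank ▸ H.rank_le_width
  set r : ℕ := ⌊2 * (n : ℝ) * (Eavg / n + ω) / γ⌋₊ with hr
  set B : ℝ := ∑ i ∈ Finset.range (r + 1), (Nat.choose n i : ℝ) with hB
  set E' : ℝ := Real.exp (-β * (Eavg - ω * n)) with hE'
  set P : ℝ := (1 + Real.exp (-β)) ^ m with hP
  have hPpos : 0 < P := by positivity
  have hBnonneg : 0 ≤ B := Finset.sum_nonneg fun i _ => Nat.cast_nonneg _
  have hE'pos : 0 < E' := Real.exp_pos _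
  have hpow : (2:ℝ) ^ (n - m) = 2 ^ n / 2 ^ m := by
    rw [eq_div_iff (by positivity : (2:ℝ)^m ≠ 0), ← pow_add]
    congr 1
    omega
  have hRHS : 2 * (2 : ℝ) ^ m / 2 ^ n * P⁻¹ * B * E' = 2 * (B * (E' / Z)) := by
    rw [hZ, hpow]
    field_simp
  rw [hRHS]
  have hΞbound : ∀ u ∈ Ξ, pG u ≤ E' / Z := by
    intro u hu
    have hu' := (hΞmem u).1 hu
    have hlow : Eavg - ω * n ≤ (hammingNorm (H.mulVec u) : ℝ) := by
      have h1 := abs_le.1 hu'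
      linarith [h1.1]
    have hexp1 : Real.exp (-β * (hammingNorm (H.mulVec u) : ℝ)) ≤ E' := by
      rw [hE']
      apply Real.exp_le_exp.2
      nlinarith
    rw [hpgdef]
    exact div_le_div_of_nonneg_right hexp1 hZpos.le
  have hcard : ((C ∩ Ξ).card : ℝ) ≤ B := by
    rcases Finset.eq_empty_or_nonempty (C ∩ Ξ) with hemp | ⟨u₀, hu₀⟩
    · rw [hemp]; simpa using hBnonneg
    have hu₀C : Connected H ε ξ x u₀ := (hCmem u₀).1 (Finset.mem_inter.1 hu₀).1
    have hmem : ∀ u ∈ C ∩ Ξ, hammingNorm (u + u₀) ≤ r := by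
      intro u hu
      have huC : Connected H ε ξ x u := (hCmem u).1 (Finset.mem_inter.1 hu).1
      have hconn : Connected H ε ξ u₀ u := connected_trans (connected_symm hu₀C) huC
      have hclose : (hammingNorm (u + u₀) : ℝ) < 2 * ε * n / γ :=
        cluster_close hγ hexp hε0 hε hξ0 hξ hn hconn
      have hδn : (hammingNorm (u + u₀) : ℝ) ≤ δ * n := by
        have h1 : 2 * ε * n / γ ≤ δ * n := by
          rw [div_le_iff₀ hγ]
          nlinarith
        linarith
      have hHuu : (hammingNorm (H.mulVec (u + u₀)) : ℝ) ≤ 2 * (Eavg + ω * n) := by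
        have h1 : H.mulVec (u + u₀) = H.mulVec u + H.mulVec u₀ := Matrix.mulVec_add H u u₀
        have h2 : (hammingNorm (H.mulVec u + H.mulVec u₀) : ℝ)
            ≤ (hammingNorm (H.mulVec u) : ℝ) + (hammingNorm (H.mulVec u₀) : ℝ) := by
          exact_mod_cast hammingNorm_add_le _ _
        have h3 : ∀ w, w ∈ C ∩ Ξ → (hammingNorm (H.mulVec w) : ℝ) ≤ Eavg + ω * n := by
          intro w hw
          have h4 := abs_le.1 ((hΞmem w).1 (Finset.mem_inter.1 hw).2)
          linarith [h4.2]
        rw [h1]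
        linarith [h3 u hu, h3 u₀ hu₀]
      have hexp' := hexp (u + u₀) hδn
      have hfinal : (hammingNorm (u + u₀) : ℝ) ≤ 2 * (n : ℝ) * (Eavg / n + ω) / γ := by
        have heq : 2 * (n : ℝ) * (Eavg / n + ω) / γ = 2 * (Eavg + ω * n) / γ := by
          field_simp
        rw [heq, le_div_iff₀ hγ]
        nlinarith
      exact Nat.le_floor hfinal
    have hinj : Set.InjOn (fun u : Fin n → ZMod 2 => u + u₀) ((C ∩ Ξ) : Set (Fin n → ZMod 2)) :=
      fun a _ b _ hab => by
        have h5 := congrArg (fun w => w + u₀) hab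
        simpa [add_assoc, zmod2_add_self] using h5
    have hcard1 : (C ∩ Ξ).card ≤
        ((Finset.univ : Finset (Fin n → ZMod 2)).filter (fun z => hammingNorm z ≤ r)).card := by
      apply Finset.card_le_card_of_injOn (fun u => u + u₀) ?_ ?_
      · intro u hu
        simp only [Finset.mem_coe, Finset.mem_filter, Finset.mem_univ, true_and]
        exact hmem u hu
      · rw [Finset.coe_inter]
        exact hinj
    have hcard2 := card_ball (n := n) r
    have h6 : ((C ∩ Ξ).card : ℝ) ≤ ((∑ i ∈ Finset.range (r + 1), n.choose i : ℕ) : ℝ) := by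
      exact_mod_cast le_trans hcard1 hcard2
    calc ((C ∩ Ξ).card : ℝ) ≤ ((∑ i ∈ Finset.range (r + 1), n.choose i : ℕ) : ℝ) := h6
      _ = B := by rw [hB]; push_cast; ring
  have hsum : ∑ u ∈ C ∩ Ξ, pG u ≤ ((C ∩ Ξ).card : ℝ) * (E' / Z) := by
    calc ∑ u ∈ C ∩ Ξ, pG u ≤ ∑ _u ∈ C ∩ Ξ, E' / Z :=
          Finset.sum_le_sum fun u hu => hΞbound u (Finset.mem_inter.1 hu).2
      _ = ((C ∩ Ξ).card : ℝ) * (E' / Z) := by rw [Finset.sum_const, nsmul_eq_mul]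
  have hMpos : 0 ≤ E' / Z := div_nonneg hE'pos.le hZpos.le
  have h2 : ∑ u ∈ C ∩ Ξ, pG u ≤ B * (E' / Z) :=
    hsum.trans (mul_le_mul_of_nonneg_right hcard hMpos)
  linarith
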